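/- (Equivalence of semigroup and sequence formulations) Let {γ*(C+λ; S, Q) : λ ∈ Λ', Q ∈ S'} be lower bounds for γ(C+λ; S, Q) satisfying γ*(C+λ+P; S, Q) >= γ*(C+λ; S, Q) whenever P ≠ Q. Then max over sequences Q_0,...,Q_r ∈ S' of min_{j} γ*(C + R_j; S, Q_j) equals min_{λ ∈ Λ'} max_{Q ∈ S'} γ*(C+λ; S, Q), where R_0 = 0 and R_j = R_{j-1} + Q_{j-1}. -/

import Mathlib

noncomputable section

/-- `R_j = Q_0 + Q_1 + ... + Q_{j-1}`, the partial sums of a sequence of points,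
viewed as divisors. -/
def Rdiv {Point : Type*} (Q : ℕ → Point) (j : ℕ) : Point →₀ ℤ :=
  ∑ k ∈ Finset.range j, Finsupp.single (Q k) 1

namespace SeqSemiAux

variable {Point : Type*}

/-- Total degree of a divisor. -/
def sdeg (μ : Point →₀ ℤ) : ℤ := μ.sum fun _ v => v

lemma sdeg_add (μ ν : Point →₀ ℤ) : sdeg (μ + ν) = sdeg μ + sdeg ν :=
  Finsupp.sum_add_index' (fun _ => rfl) (fun _ _ _ => rfl)

lemma sdeg_single (P : Point) (b : ℤ) : sdeg (Finsupp.single P b) = b :=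
  Finsupp.sum_single_index rfl

lemma sdeg_nonneg {μ : Point →₀ ℤ} (h : 0 ≤ μ) : 0 ≤ sdeg μ :=
  Finset.sum_nonneg fun a _ => Finsupp.le_def.mp h a

lemma eq_zero_of_sdeg_eq_zero {μ : Point →₀ ℤ} (h : 0 ≤ μ) (h0 : sdeg μ = 0) : μ = 0 := by
  have hall : ∀ a ∈ μ.support, μ a = 0 :=
    (Finset.sum_eq_zero_iff_of_nonneg fun a _ => Finsupp.le_def.mp h a).mp h0
  ext a
  by_cases ha : a ∈ μ.support
  · exact hall a ha
  · simpa using Finsupp.notMem_support_iff.mp ha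

lemma rdiv_zero (Q : ℕ → Point) : Rdiv Q 0 = 0 := by simp [Rdiv]

lemma rdiv_succ (Q : ℕ → Point) (j : ℕ) :
    Rdiv Q (j + 1) = Rdiv Q j + Finsupp.single (Q j) 1 := by
  simp [Rdiv, Finset.sum_range_succ]

lemma rdiv_succ' (Q : ℕ → Point) (j : ℕ) :
    Rdiv Q (j + 1) = Rdiv (fun k => Q (k + 1)) j + Finsupp.single (Q 0) 1 := by
  simp [Rdiv, Finset.sum_range_succ']

/-- Monotonicity along a nonnegative multiple of a single point. -/
lemma chain_single (gstar : (Point →₀ ℤ) → Point → ℤ)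
    (hmono : ∀ (D : Point →₀ ℤ) (P Q : Point), P ≠ Q →
      gstar D Q ≤ gstar (D + Finsupp.single P 1) Q)
    {P Q : Point} (hPQ : P ≠ Q) {b : ℤ} (hb : 0 ≤ b) (D : Point →₀ ℤ) :
    gstar D Q ≤ gstar (D + Finsupp.single P b) Q := by
  lift b to ℕ using hb
  induction b generalizing D with
  | zero => simp
  | succ n ih =>
    have h1 : gstar D Q ≤ gstar (D + Finsupp.single P (n : ℤ)) Q := ih D
    have h2 := hmono (D + Finsupp.single P (n : ℤ)) P Q hPQ
    calc gstar D Q ≤ gstar (D + Finsupp.single P (n : ℤ)) Q := h1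
      _ ≤ gstar (D + Finsupp.single P (n : ℤ) + Finsupp.single P 1) Q := h2
      _ = gstar (D + Finsupp.single P ((n : ℤ) + 1)) Q := by
          rw [Finsupp.single_add, add_assoc]
      _ = gstar (D + Finsupp.single P ((n + 1 : ℕ) : ℤ)) Q := by push_cast; ring_nf

/-- Monotonicity along any nonnegative divisor avoiding `Q`. -/
lemma chain (gstar : (Point →₀ ℤ) → Point → ℤ)
    (hmono : ∀ (D : Point →₀ ℤ) (P Q : Point), P ≠ Q →
      gstar D Q ≤ gstar (D + Finsupp.single P 1) Q)
    (Q : Point) (μ : Point →₀ ℤ) (hμ : 0 ≤ μ) (hQ : μ Q = 0) (D : Point →₀ ℤ) :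
    gstar D Q ≤ gstar (D + μ) Q := by
  induction μ using Finsupp.induction generalizing D with
  | zero => simp
  | single_add a b f haf hb ih =>
    have hfa : f a = 0 := Finsupp.notMem_support_iff.mp haf
    have hf : 0 ≤ f := by
      rw [Finsupp.le_def]
      intro x
      by_cases hx : x = a
      · simp [hx, hfa]
      · have := Finsupp.le_def.mp hμ x
        simpa [Finsupp.single_apply, Ne.symm hx, hx] using this
    have hba : 0 ≤ b := by
      have := Finsupp.le_def.mp hμ a
      simpa [Finsupp.single_apply, hfa] using this
    have haQ : a ≠ Q := by
      rintro rfl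
      have : b + f a = 0 := by simpa [Finsupp.single_apply] using hQ
      rw [hfa, add_zero] at this
      exact hb this
    have hfQ : f Q = 0 := by
      have : b * 0 + f Q = 0 := by
        simpa [Finsupp.single_apply, haQ] using hQ
      simpa using this
    calc gstar D Q ≤ gstar (D + f) Q := ih hf hfQ D
      _ ≤ gstar (D + f + Finsupp.single a b) Q := chain_single gstar hmono haQ hba _
      _ = gstar (D + (Finsupp.single a b + f)) Q := by rw [add_assoc, add_comm f]

/-- The key combinatorial fact: for any sequence, some partial sum `R_j` with
`j ≤ deg lam` sits below `lam` and agrees with `lam` at `Q j`. -/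
lemma exists_hit : ∀ (n : ℕ) (lam : Point →₀ ℤ), 0 ≤ lam → sdeg lam = n →
    ∀ Q : ℕ → Point, ∃ j ≤ n, Rdiv Q j ≤ lam ∧ (Rdiv Q j) (Q j) = lam (Q j) := by
  intro n
  induction n with
  | zero =>
    intro lam hlam hdeg Q
    have : lam = 0 := eq_zero_of_sdeg_eq_zero hlam (by exact_mod_cast hdeg)
    exact ⟨0, le_refl 0, by simp [rdiv_zero, this], by simp [rdiv_zero, this]⟩
  | succ n ih =>
    intro lam hlam hdeg Q
    by_cases h0 : lam (Q 0) = 0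
    · exact ⟨0, Nat.zero_le _, by simpa [rdiv_zero] using hlam, by simp [rdiv_zero, h0]⟩
    · have hpos : 1 ≤ lam (Q 0) := by
        have := Finsupp.le_def.mp hlam (Q 0)
        simp only [Finsupp.coe_zero, Pi.zero_apply] at this
        omega
      set lam' : Point →₀ ℤ := lam - Finsupp.single (Q 0) 1 with hlam'
      have hsum : lam = lam' + Finsupp.single (Q 0) 1 := by
        rw [hlam']; abel
      have hlam'0 : 0 ≤ lam' := by
        rw [Finsupp.le_def]
        intro x
        by_cases hx : x = Q 0
        · simp [hlam', hx, Finsupp.single_apply]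
          omega
        · have := Finsupp.le_def.mp hlam x
          simpa [hlam', Finsupp.sub_apply, Finsupp.single_apply, Ne.symm hx, hx] using this
      have hdeg' : sdeg lam' = n := by
        have := sdeg_add lam' (Finsupp.single (Q 0) 1)
        rw [← hsum, sdeg_single, hdeg] at this
        push_cast at this ⊢
        omega
      obtain ⟨j, hj, hle, heq⟩ := ih lam' hlam'0 hdeg' (fun k => Q (k + 1))
      refine ⟨j + 1, by omega, ?_, ?_⟩
      · rw [rdiv_succ', hsum]
        exact add_le_add hle le_rfl
      · rw [rdiv_succ', hsum]
        simp only [Finsupp.add_apply]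
        rw [heq]

end SeqSemiAux

open SeqSemiAux in
/-- (Equivalence of the semigroup and sequence formulations of the order bound)
Let `γ*(C+λ; S, Q)` (`λ ∈ Λ'`, `Q ∈ S'`) be lower bounds for `γ(C+λ; S, Q)` satisfying
the monotonicity `γ*(C+λ+P; S, Q) ≥ γ*(C+λ; S, Q)` whenever `P ≠ Q`, where `Λ'` is the
semigroup (with `0`) generated by the points of `S'`.  Then, for all long enough
sequences, the maximum over sequences `Q_0, ..., Q_r ∈ S'` of
`min_j γ*(C + R_j; S, Q_j)` equals `min_{λ ∈ Λ'} max_{Q ∈ S'} γ*(C+λ; S, Q)`,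
where `R_0 = 0` and `R_j = R_{j-1} + Q_{j-1}`. -/
theorem sequence_eq_semigroup_bound {Point : Type*} (S' : Finset Point)
    (hS' : S'.Nonempty) (C : Point →₀ ℤ)
    (gstar : (Point →₀ ℤ) → Point → ℤ)
    (hmono : ∀ (D : Point →₀ ℤ) (P Q : Point), P ≠ Q →
      gstar D Q ≤ gstar (D + Finsupp.single P 1) Q)
    (hbdd : BddBelow {m : ℤ | ∃ lam : Point →₀ ℤ, 0 ≤ lam ∧ lam.support ⊆ S' ∧
      m = S'.sup' hS' fun Q => gstar (C + lam) Q}) :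
    ∃ r0 : ℕ, ∀ r ≥ r0,
      sSup {m : ℤ | ∃ Q : ℕ → Point, (∀ j, Q j ∈ S') ∧
          m = (Finset.range (r + 1)).inf' ⟨0, Finset.mem_range.mpr (Nat.succ_pos r)⟩
                fun j => gstar (C + Rdiv Q j) (Q j)}
        = sInf {m : ℤ | ∃ lam : Point →₀ ℤ, 0 ≤ lam ∧ lam.support ⊆ S' ∧
            m = S'.sup' hS' fun Q => gstar (C + lam) Q} := by
  classical
  set T : Set ℤ := {m : ℤ | ∃ lam : Point →₀ ℤ, 0 ≤ lam ∧ lam.support ⊆ S' ∧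
      m = S'.sup' hS' fun Q => gstar (C + lam) Q} with hT
  have hTne : T.Nonempty := ⟨_, 0, le_refl _, by simp, rfl⟩
  set B : ℤ := sInf T with hB
  obtain ⟨lam0, hlam0, hsupp0, hBval⟩ : B ∈ T := Int.csInf_mem hTne hbdd
  -- the threshold
  refine ⟨(sdeg lam0).toNat, fun r hr => ?_⟩
  have hdeg0 : sdeg lam0 = ((sdeg lam0).toNat : ℤ) :=
    (Int.toNat_of_nonneg (sdeg_nonneg hlam0)).symm
  -- Every sequence value is at most B.
  have hub : ∀ Q : ℕ → Point, (∀ j, Q j ∈ S') →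
      ((Finset.range (r + 1)).inf' ⟨0, Finset.mem_range.mpr (Nat.succ_pos r)⟩
        fun j => gstar (C + Rdiv Q j) (Q j)) ≤ B := by
    intro Q hQ
    obtain ⟨j, hj, hle, heq⟩ := exists_hit (sdeg lam0).toNat lam0 hlam0 hdeg0 Q
    have hmem : j ∈ Finset.range (r + 1) := Finset.mem_range.mpr (by omega)
    have step1 : gstar (C + Rdiv Q j) (Q j) ≤ gstar (C + lam0) (Q j) := by
      have hchain := chain gstar hmono (Q j) (lam0 - Rdiv Q j)
        (by rwa [sub_nonneg]) (by simp [Finsupp.sub_apply, heq]) (C + Rdiv Q j)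
      have : C + Rdiv Q j + (lam0 - Rdiv Q j) = C + lam0 := by abel
      rwa [this] at hchain
    have step2 : gstar (C + lam0) (Q j) ≤ B := hBval ▸ Finset.le_sup' _ (hQ j)
    exact le_trans (Finset.inf'_le _ hmem) (le_trans step1 step2)
  -- Greedy sequence achieving B.
  have hex : ∀ D : Point →₀ ℤ, ∃ q ∈ S',
      (S'.sup' hS' fun Q => gstar (C + D) Q) = gstar (C + D) q :=
    fun D => Finset.exists_mem_eq_sup' hS' _
  choose pick hpick1 hpick2 using hex
  set R : ℕ → Point →₀ ℤ :=
    fun j => Nat.rec 0 (fun _ Rk => Rk + Finsupp.single (pick Rk) 1) j with hR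
  have hRsucc : ∀ j, R (j + 1) = R j + Finsupp.single (pick (R j)) 1 := fun j => rfl
  set Qg : ℕ → Point := fun j => pick (R j) with hQg
  have hQgmem : ∀ j, Qg j ∈ S' := fun j => hpick1 _
  have hRdiv : ∀ j, Rdiv Qg j = R j := by
    intro j
    induction j with
    | zero => simp [rdiv_zero, hR]
    | succ n ih => rw [rdiv_succ, ih, hRsucc]
  have hRfeas : ∀ j, 0 ≤ R j ∧ (R j).support ⊆ S' := by
    intro j
    induction j with
    | zero => constructor <;> simp [hR]
    | succ n ih =>
      rw [hRsucc]
      constructor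
      · exact add_nonneg ih.1 (Finsupp.single_nonneg.mpr zero_le_one)
      · refine Finsupp.support_add.trans ?_
        intro x hx
        rcases Finset.mem_union.mp hx with hx | hx
        · exact ih.2 hx
        · have := Finsupp.support_single_subset hx
          simp only [Finset.mem_singleton] at this
          subst this
          exact hpick1 _
  have hlbterm : ∀ j, B ≤ gstar (C + Rdiv Qg j) (Qg j) := by
    intro j
    have : gstar (C + Rdiv Qg j) (Qg j) = S'.sup' hS' fun Q => gstar (C + R j) Q := by
      rw [hRdiv]; exact (hpick2 (R j)).symm
    rw [this]
    exact csInf_le hbdd ⟨R j, (hRfeas j).1, (hRfeas j).2, rfl⟩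
  set Sset : Set ℤ := {m : ℤ | ∃ Q : ℕ → Point, (∀ j, Q j ∈ S') ∧
      m = (Finset.range (r + 1)).inf' ⟨0, Finset.mem_range.mpr (Nat.succ_pos r)⟩
            fun j => gstar (C + Rdiv Q j) (Q j)} with hSset
  have hSmem : B ∈ Sset := by
    refine ⟨Qg, hQgmem, ?_⟩
    have h1 : B ≤ (Finset.range (r + 1)).inf' ⟨0, Finset.mem_range.mpr (Nat.succ_pos r)⟩
        fun j => gstar (C + Rdiv Qg j) (Qg j) :=
      Finset.le_inf' _ _ fun j _ => hlbterm j
    have h2 := hub Qg hQgmem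
    omega
  have hSub : ∀ m ∈ Sset, m ≤ B := by
    rintro m ⟨Q, hQ, rfl⟩
    exact hub Q hQ
  exact le_antisymm (csSup_le ⟨B, hSmem⟩ hSub) (le_csSup ⟨B, hSub⟩ hSmem)
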